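/- Let k be a field of characteristic zero, V a finite-dimensional k-vector space, ψ an alternating bilinear form on V, and 𝔏 a Lie subalgebra of the endomorphisms of V. Let δ', δ'' ∈ V be such that N_{δ'} ∈ 𝔏, N_{δ''} ∈ 𝔏, and ψ(δ'', δ') ≠ 0. Then for every vector δ in the linear span of δ' and δ'', the endomorphism N_δ lies in 𝔏. -/

import Mathlib

/-- For a bilinear form `ψ` on `V` and `δ ∈ V`, the endomorphism `N_δ : x ↦ ψ(x, δ) δ`. -/
noncomputable def vanishingCycleEndo {k V : Type*} [Field k] [AddCommGroup V] [Module k V]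
    (ψ : LinearMap.BilinForm k V) (δ : V) : Module.End k V :=
  LinearMap.smulRight (ψ.flip δ) δ

attribute [local instance 100] LieRing.ofAssociativeRing

/-- Step b) in the proof of Lemma (5.11) of Deligne's Weil I: if `N_{δ'}, N_{δ''}`
belong to a Lie subalgebra `𝔏` of `End(V)` and `ψ(δ'', δ') ≠ 0` (`ψ` alternating), then
`N_δ ∈ 𝔏` for every `δ` in the span of `δ'` and `δ''`. -/
theorem vanishingCycleEndo_mem_of_span
    {k V : Type*} [Field k] [CharZero k] [AddCommGroup V] [Module k V]
    [FiniteDimensional k V]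
    (ψ : LinearMap.BilinForm k V) (halt : ψ.IsAlt)
    (L : LieSubalgebra k (Module.End k V)) (δ' δ'' : V)
    (h' : vanishingCycleEndo ψ δ' ∈ L) (h'' : vanishingCycleEndo ψ δ'' ∈ L)
    (hpair : ψ δ'' δ' ≠ 0) :
    ∀ δ ∈ Submodule.span k ({δ', δ''} : Set V), vanishingCycleEndo ψ δ ∈ L := by
  intro δ hδ
  rw [Submodule.mem_span_pair] at hδ
  obtain ⟨a, b, rfl⟩ := hδ
  set c := ψ δ'' δ' with hc
  have hswap : ψ δ' δ'' = -c := by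
    rw [hc, ← halt.neg_eq δ'' δ']
  have key : vanishingCycleEndo ψ (a • δ' + b • δ'') =
      (a * a) • vanishingCycleEndo ψ δ' + (b * b) • vanishingCycleEndo ψ δ''
        - (a * b / c) • ⁅vanishingCycleEndo ψ δ'', vanishingCycleEndo ψ δ'⁆ := by
    ext x
    simp only [vanishingCycleEndo, LinearMap.sub_apply, LinearMap.add_apply,
      LinearMap.smul_apply, LinearMap.smulRight_apply, LinearMap.flip_apply,
      Ring.lie_def, Module.End.mul_apply, LinearMap.map_add, LinearMap.map_smul, map_add, map_smul,
      smul_eq_mul, smul_add, smul_smul, smul_sub]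
    simp only [LinearMap.BilinForm.flip_apply]
    rw [hswap]
    match_scalars <;> field_simp <;> ring
  rw [key]
  exact L.sub_mem (L.add_mem (L.smul_mem _ h') (L.smul_mem _ h''))
    (L.smul_mem _ (L.lie_mem h'' h'))
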